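/- Let k ∈ ℂ with Re(k) < 0 and let w ∈ ℂ with w ≠ 1. If Re(k(1 + w)/(1 − w)) ≤ 0, then |w| ≤ |Im(k)/Re(k)| + √((Im(k)/Re(k))² + 1). -/

import Mathlib

/-- Let k ∈ ℂ with Re(k) < 0 and let w ∈ ℂ with w ≠ 1. If
Re(k(1 + w)/(1 − w)) ≤ 0, then |w| ≤ |Im(k)/Re(k)| + √((Im(k)/Re(k))² + 1). -/
theorem stmt_7 (k w : ℂ) (hk : k.re < 0) (hw : w ≠ 1)
    (h : (k * (1 + w) / (1 - w)).re ≤ 0) :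
    ‖w‖ ≤ |k.im / k.re| + Real.sqrt ((k.im / k.re) ^ 2 + 1) := by
  have hw' : (1 : ℂ) - w ≠ 0 := sub_ne_zero.2 (Ne.symm hw)
  have hd : 0 < Complex.normSq (1 - w) := Complex.normSq_pos.2 hw'
  have key : k.re * (1 - (w.re ^ 2 + w.im ^ 2)) - 2 * k.im * w.im ≤ 0 := by
    rw [Complex.div_re, ← add_div] at h
    have hnum : (k * (1 + w)).re * (1 - w).re + (k * (1 + w)).im * (1 - w).im ≤ 0 := by
      by_contra hc
      push_neg at hc
      have := div_pos hc hd
      linarith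
    simp only [Complex.mul_re, Complex.mul_im, Complex.add_re, Complex.add_im,
      Complex.sub_re, Complex.sub_im, Complex.one_re, Complex.one_im] at hnum
    nlinarith [hnum]
  set a := k.re with ha
  set b := k.im with hb
  set r := ‖w‖ with hrdef
  have hr : r ^ 2 = w.re ^ 2 + w.im ^ 2 := by
    rw [hrdef, Complex.sq_norm, Complex.normSq_apply]; ring
  have him : |w.im| ≤ r := Complex.abs_im_le_norm w
  have hr0 : 0 ≤ r := norm_nonneg w
  set t := |b / a| with htdef
  have ht0 : 0 ≤ t := abs_nonneg _
  have ht : t * (-a) = |b| := by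
    rw [htdef, abs_div, abs_of_neg hk]
    field_simp
    exact mul_div_cancel_right₀ _ hk.ne
  have hbw : b * w.im ≤ |b| * r := by
    calc b * w.im ≤ |b * w.im| := le_abs_self _
    _ = |b| * |w.im| := abs_mul _ _
    _ ≤ |b| * r := by nlinarith [abs_nonneg b]
  have hs : Real.sqrt (t ^ 2 + 1) ^ 2 = t ^ 2 + 1 :=
    Real.sq_sqrt (by positivity)
  have hs0 : 0 ≤ Real.sqrt (t ^ 2 + 1) := Real.sqrt_nonneg _
  set s := Real.sqrt (t ^ 2 + 1) with hsdef
  -- from key: a(1 - r²) ≤ 2 b w.im ≤ 2|b| r = 2 t (-a) r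
  have h1 : a * (1 - r ^ 2) ≤ 2 * (t * (-a)) * r := by
    rw [ht]; nlinarith [key, hr, hbw]
  -- divide by a < 0 : 1 - r² + 2 t r ≥ 0, i.e. (r - t)² ≤ t² + 1 = s²
  have h3 : 0 ≤ 1 - r ^ 2 + 2 * t * r := by
    by_contra hc
    push_neg at hc
    nlinarith [mul_pos_of_neg_of_neg hk (by linarith : 1 - r ^ 2 + 2 * t * r < 0)]
  have h2 : (r - t) ^ 2 ≤ s ^ 2 := by rw [hs]; nlinarith [h3]
  rw [← sq_abs (b / a), ← htdef, ← hsdef]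
  nlinarith [h2, hs0, hr0, ht0, sq_nonneg (r - t + s), sq_nonneg (r - t - s)]
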